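/- For every magma (G,∘) and every integer n ≥ 2, the associative spectrum satisfies s_G(n) ≤ s_G(1)·s_G(n−1) + s_G(2)·s_G(n−2) + ⋯ + s_G(n−1)·s_G(1) = Σ_{k=1}^{n−1} s_G(k)·s_G(n−k). (Paper's Proposition 2.3.) -/

import Mathlib

/-- A bracketing of size `n`: a full binary tree with `n` leaves. -/
inductive Bracketing : ℕ → Type
  | leaf : Bracketing 1
  | node : {k l : ℕ} → Bracketing k → Bracketing l → Bracketing (k + l)

/-- The `n`-ary regular operation induced by a bracketing on a magma `(G, op)`. -/
def Bracketing.eval {G : Type*} (op : G → G → G) : {n : ℕ} → Bracketing n → (Fin n → G) → G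
  | _, .leaf, v => v 0
  | _, .node P Q, v =>
      op (Bracketing.eval op P (fun i => v (Fin.castAdd _ i)))
         (Bracketing.eval op Q (fun i => v (Fin.natAdd _ i)))

/-- The associative spectrum: the number of distinct `n`-ary regular operations. -/
noncomputable def assocSpectrum {G : Type*} (op : G → G → G) (n : ℕ) : ℕ :=
  Nat.card {f : (Fin n → G) → G // ∃ B : Bracketing n, f = Bracketing.eval op B}

/-- The depth of the `i`-th leaf of a bracketing. -/
def Bracketing.depth : {n : ℕ} → Bracketing n → Fin n → ℕ
  | _, .leaf, _ => 0
  | _, .node (k := k) P Q, i =>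
      if h : (i : ℕ) < k then Bracketing.depth P ⟨i, h⟩ + 1
      else Bracketing.depth Q ⟨(i : ℕ) - k, by have := i.isLt; omega⟩ + 1

/-- The right depth of the `i`-th leaf of a bracketing. -/
def Bracketing.rdepth : {n : ℕ} → Bracketing n → Fin n → ℕ
  | _, .leaf, _ => 0
  | _, .node (k := k) P Q, i =>
      if h : (i : ℕ) < k then Bracketing.rdepth P ⟨i, h⟩
      else Bracketing.rdepth Q ⟨(i : ℕ) - k, by have := i.isLt; omega⟩ + 1

/-- The left depth of the `i`-th leaf of a bracketing. -/
def Bracketing.ldepth : {n : ℕ} → Bracketing n → Fin n → ℕ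
  | _, .leaf, _ => 0
  | _, .node (k := k) P Q, i =>
      if h : (i : ℕ) < k then Bracketing.ldepth P ⟨i, h⟩ + 1
      else Bracketing.ldepth Q ⟨(i : ℕ) - k, by have := i.isLt; omega⟩

/-- A magma operation is Catalan if distinct bracketings of equal size
    induce distinct regular operations. -/
def IsCatalanOp {G : Type*} (op : G → G → G) : Prop :=
  ∀ (n : ℕ) (B₁ B₂ : Bracketing n), B₁ ≠ B₂ →
    Bracketing.eval op B₁ ≠ Bracketing.eval op B₂


lemma Bracketing.one_le : ∀ {n : ℕ}, Bracketing n → 1 ≤ n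
  | _, .leaf => le_refl 1
  | _, .node P _Q => le_trans P.one_le (Nat.le_add_right _ _)

/-- A default bracketing of every positive size. -/
def Bracketing.comb : (n : ℕ) → Bracketing (n + 1)
  | 0 => .leaf
  | m + 1 => (Nat.add_comm 1 (m + 1) ▸ (Bracketing.leaf.node (Bracketing.comb m)) : Bracketing (m + 1 + 1))

instance Bracketing.finite : ∀ n, Finite (Bracketing n) := by
  intro n
  induction n using Nat.strong_induction_on with
  | _ n ih =>
    rcases eq_or_ne n 0 with rfl | h0
    · haveI : IsEmpty (Bracketing 0) := ⟨fun B => by have := B.one_le; omega⟩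
      infer_instance
    · haveI : ∀ p : Fin n × Fin n, Finite (Bracketing p.1 × Bracketing p.2) :=
        fun p => by haveI := ih p.1 p.1.isLt; haveI := ih p.2 p.2.isLt; infer_instance
      have hd : n - 1 + 1 = n := Nat.succ_pred_eq_of_ne_zero h0
      apply Finite.of_surjective
        (f := fun x : Unit ⊕ ((p : Fin n × Fin n) × (Bracketing p.1 × Bracketing p.2)) =>
          match x with
          | .inl _ => if h : n = 1 then (h ▸ Bracketing.leaf : Bracketing n)
              else (hd ▸ Bracketing.comb (n - 1) : Bracketing n)
          | .inr ⟨(a, b), P, Q⟩ =>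
              if h : (a : ℕ) + (b : ℕ) = n then (h ▸ P.node Q : Bracketing n)
              else (hd ▸ Bracketing.comb (n - 1) : Bracketing n))
      intro B
      cases B with
      | leaf => exact ⟨.inl (), by simp⟩
      | node P Q =>
        rename_i k l
        have hk : k < k + l := by have := Q.one_le; omega
        have hl : l < k + l := by have := P.one_le; omega
        exact ⟨.inr ⟨(⟨k, hk⟩, ⟨l, hl⟩), P, Q⟩, by simp⟩

/-- The set of `k`-ary regular operations, as a type. -/
def RegOps {G : Type*} (op : G → G → G) (k : ℕ) : Type _ :=
  {f : (Fin k → G) → G // ∃ B : Bracketing k, f = Bracketing.eval op B}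

instance RegOps.finite {G : Type*} (op : G → G → G) (k : ℕ) : Finite (RegOps op k) :=
  Finite.of_surjective (fun B : Bracketing k => (⟨Bracketing.eval op B, B, rfl⟩ : RegOps op k))
    (by rintro ⟨f, B, rfl⟩; exact ⟨B, rfl⟩)

lemma Bracketing.eval_cast {G : Type*} (op : G → G → G) {a b : ℕ} (h : a = b)
    (B : Bracketing a) :
    Bracketing.eval op (h ▸ B) = fun v => Bracketing.eval op B (fun i => v (Fin.cast h i)) := by
  subst h; rfl

/-- Paper's Proposition 2.3: `s(n) ≤ ∑_{k=1}^{n-1} s(k)·s(n-k)` for `n ≥ 2`. -/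
theorem stmt1 {G : Type*} (op : G → G → G) (n : ℕ) (hn : 2 ≤ n) :
    assocSpectrum op n ≤ ∑ k ∈ Finset.Ico 1 n, assocSpectrum op k * assocSpectrum op (n - k) := by
  classical
  let I : Type := {q : ℕ × ℕ // q.1 + q.2 = n ∧ 1 ≤ q.1 ∧ 1 ≤ q.2}
  let F : I → Type _ := fun q => RegOps op q.1.1 × RegOps op q.1.2
  let φ : ((q : I) × F q) → RegOps op n := fun x =>
    ⟨fun v => op (x.2.1.1 fun i => v (Fin.cast x.1.2.1 (Fin.castAdd x.1.1.2 i)))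
                 (x.2.2.1 fun i => v (Fin.cast x.1.2.1 (Fin.natAdd x.1.1.1 i))), by
      obtain ⟨P, hP⟩ := x.2.1.2
      obtain ⟨Q, hQ⟩ := x.2.2.2
      refine ⟨x.1.2.1 ▸ P.node Q, ?_⟩
      rw [Bracketing.eval_cast, hP, hQ]
      rfl⟩
  have hφ : Function.Surjective φ := by
    rintro ⟨f, B, rfl⟩
    cases B with
    | leaf => omega
    | node P Q =>
      rename_i k l
      exact ⟨⟨⟨(k, l), rfl, P.one_le, Q.one_le⟩,
        ⟨Bracketing.eval op P, P, rfl⟩, ⟨Bracketing.eval op Q, Q, rfl⟩⟩, rfl⟩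
  let e : (Finset.Ico 1 n) ≃ I :=
    { toFun := fun k => ⟨(k.1, n - k.1), by
        have := Finset.mem_Ico.mp k.2; refine ⟨by omega, by omega, by omega⟩⟩
      invFun := fun q => ⟨q.1.1, Finset.mem_Ico.mpr ⟨q.2.2.1, by omega⟩⟩
      left_inv := fun k => Subtype.ext rfl
      right_inv := fun q => Subtype.ext (by obtain ⟨⟨a, b⟩, hq⟩ := q; simp; omega) }
  have hT : Nat.card ((q : I) × F q) =
      Nat.card ((k : Finset.Ico 1 n) × (RegOps op k.1 × RegOps op (n - k.1))) :=
    (Nat.card_eq_of_bijective _ (Equiv.sigmaCongrLeft (β := F) e).bijective).symm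
  haveI : Finite I := Finite.of_equiv _ e
  have key := Nat.card_le_card_of_surjective φ hφ
  rw [hT] at key
  show Nat.card (RegOps op n) ≤ _
  refine key.trans (le_of_eq ?_)
  haveI : ∀ k, Fintype (RegOps op k) := fun k => Fintype.ofFinite _
  rw [Nat.card_eq_fintype_card, Fintype.card_sigma]
  rw [← Finset.sum_attach (Finset.Ico 1 n)
    (fun k => assocSpectrum op k * assocSpectrum op (n - k))]
  refine Finset.sum_congr rfl fun k _ => ?_
  simp only [assocSpectrum, RegOps, Fintype.card_prod, ← Nat.card_eq_fintype_card, Nat.card_prod]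
  exact Fintype.card_eq_nat_card.trans (Nat.card_prod _ _)
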